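/- Single-copy lower bound on the optimal error probability: For all quantum states ρ, σ on ℂ^d and all p ∈ (0,1) with q := 1 − p, (1/2)·(1 − ‖p·ρ − q·σ‖₁) ≥ p·q·F(ρ,σ). -/

import Mathlib

open scoped ComplexOrder Classical

noncomputable section

namespace QHT

variable {ι : Type*} [Fintype ι] [DecidableEq ι]

/-- The positive semidefinite square root of a positive semidefinite matrix, as
`Matrix.PosSemidef.sqrt` was defined in Mathlib (Dec 2024). -/
def psdSqrt {A : Matrix ι ι ℂ} (hA : A.PosSemidef) : Matrix ι ι ℂ :=
  (hA.1.eigenvectorUnitary : Matrix ι ι ℂ) *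
    Matrix.diagonal ((↑) ∘ (fun x : ℝ => Real.sqrt x) ∘ hA.1.eigenvalues) *
    (star (hA.1.eigenvectorUnitary : Matrix ι ι ℂ))

/-- Trace norm of a complex matrix: `Tr[√(Aᴴ A)]`. -/
def traceNorm (A : Matrix ι ι ℂ) : ℝ :=
  ((psdSqrt (Matrix.posSemidef_conjTranspose_mul_self A)).trace).re

/-- A quantum state: positive semidefinite with unit trace. -/
def IsState (ρ : Matrix ι ι ℂ) : Prop := ρ.PosSemidef ∧ ρ.trace = 1

/-- Positive semidefinite square root (junk value `0` off the PSD matrices). -/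
def matSqrt (A : Matrix ι ι ℂ) : Matrix ι ι ℂ :=
  if h : A.PosSemidef then psdSqrt h else 0

/-- Real power of a Hermitian matrix, applying `x ↦ x ^ s` to positive
eigenvalues and `x ↦ 0` to the remaining ones (so `A ^ 0` is the support
projection); junk value `0` off the Hermitian matrices. -/
def matRpow (A : Matrix ι ι ℂ) (s : ℝ) : Matrix ι ι ℂ :=
  if h : A.IsHermitian then
    (h.eigenvectorUnitary : Matrix ι ι ℂ) *
      Matrix.diagonal (fun i =>
        ((if 0 < h.eigenvalues i then (h.eigenvalues i) ^ s else 0 : ℝ) : ℂ)) *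
      (star (h.eigenvectorUnitary : Matrix ι ι ℂ))
  else 0

/-- Fidelity `F(ρ,σ) = ‖√ρ √σ‖₁²`. -/
def Fid (ρ σ : Matrix ι ι ℂ) : ℝ := (traceNorm (matSqrt ρ * matSqrt σ)) ^ 2

/-- Holevo fidelity `F_H(ρ,σ) = (Tr[√ρ √σ])²`. -/
def FidH (ρ σ : Matrix ι ι ℂ) : ℝ := (((matSqrt ρ * matSqrt σ).trace).re) ^ 2

/-- `Q_s(A‖B) = Tr[A^s B^{1-s}]`. -/
def Qs (s : ℝ) (A B : Matrix ι ι ℂ) : ℝ := ((matRpow A s * matRpow B (1 - s)).trace).re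

/-- `Q_min(A‖B) = min_{s ∈ [0,1]} Q_s(A‖B)`. -/
def Qmin (A B : Matrix ι ι ℂ) : ℝ :=
  sInf { x : ℝ | ∃ s ∈ Set.Icc (0 : ℝ) 1, x = Qs s A B }

/-- Bures distance. -/
def dB (ρ σ : Matrix ι ι ℂ) : ℝ := Real.sqrt (2 * (1 - Real.sqrt (Fid ρ σ)))

/-- Quantum Hellinger distance. -/
def dH (ρ σ : Matrix ι ι ℂ) : ℝ := Real.sqrt (2 * (1 - Real.sqrt (FidH ρ σ)))

/-- `n`-fold Kronecker (tensor) power of a matrix. -/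
def tensorPow {d : ℕ} (A : Matrix (Fin d) (Fin d) ℂ) (n : ℕ) :
    Matrix (Fin n → Fin d) (Fin n → Fin d) ℂ :=
  Matrix.of fun i j => ∏ k, A (i k) (j k)

/-- Optimal error probability of symmetric binary quantum hypothesis testing
with `n` copies. -/
def pErr {d : ℕ} (p : ℝ) (ρ : Matrix (Fin d) (Fin d) ℂ) (q : ℝ)
    (σ : Matrix (Fin d) (Fin d) ℂ) (n : ℕ) : ℝ :=
  sInf { x : ℝ | ∃ Λ : Matrix (Fin n → Fin d) (Fin n → Fin d) ℂ,
    Λ.PosSemidef ∧ (1 - Λ).PosSemidef ∧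
    x = p * (((1 - Λ) * tensorPow ρ n).trace).re + q * ((Λ * tensorPow σ n).trace).re }

/-- Sample complexity of symmetric binary quantum hypothesis testing. -/
def sampleComplexity {d : ℕ} (p : ℝ) (ρ : Matrix (Fin d) (Fin d) ℂ) (q : ℝ)
    (σ : Matrix (Fin d) (Fin d) ℂ) (ε : ℝ) : ℕ :=
  sInf { n : ℕ | 1 ≤ n ∧ pErr p ρ q σ n ≤ ε }

/-- Optimal type II error `β_ε(ρ‖σ)` of asymmetric hypothesis testing. -/
def betaErr (ε : ℝ) (ρ σ : Matrix ι ι ℂ) : ℝ :=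
  sInf { x : ℝ | ∃ Λ : Matrix ι ι ℂ, Λ.PosSemidef ∧ (1 - Λ).PosSemidef ∧
    (((1 - Λ) * ρ).trace).re ≤ ε ∧ x = ((Λ * σ).trace).re }

/-- Sample complexity of asymmetric binary quantum hypothesis testing. -/
def sampleComplexityAsym {d : ℕ} (ρ σ : Matrix (Fin d) (Fin d) ℂ) (ε δ : ℝ) : ℕ :=
  sInf { n : ℕ | 1 ≤ n ∧ betaErr ε (tensorPow ρ n) (tensorPow σ n) ≤ δ }

/-- Petz–Rényi divergence `D_α(ρ‖σ)`. -/
def petzRenyi (α : ℝ) (ρ σ : Matrix ι ι ℂ) : ℝ :=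
  (1 / (α - 1)) * Real.log (((matRpow ρ α * matRpow σ (1 - α)).trace).re)

/-- Sandwiched Rényi divergence `D̃_α(ρ‖σ)`. -/
def sandwichedRenyi (α : ℝ) (ρ σ : Matrix ι ι ℂ) : ℝ :=
  (1 / (α - 1)) * Real.log
    (((matRpow (matRpow σ ((1 - α) / (2 * α)) * ρ * matRpow σ ((1 - α) / (2 * α))) α).trace).re)


section Helpers
set_option linter.unusedSectionVars false
set_option maxHeartbeats 1000000
open Matrix

open scoped MatrixOrder in
lemma psdSqrt_eq_cfc {A : Matrix ι ι ℂ} (hA : A.PosSemidef) : psdSqrt hA = CFC.sqrt A := by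
  rw [CFC.sqrt_eq_cfc, cfc_nnreal_eq_real _ A (Matrix.nonneg_iff_posSemidef.mpr hA), hA.1.cfc_eq]
  simp only [IsHermitian.cfc, psdSqrt, Unitary.conjStarAlgAut_apply]
  congr 3
  funext i
  simp
  rw [max_eq_left (hA.eigenvalues_nonneg i)]

open scoped MatrixOrder in
lemma psdSqrt_posSemidef {A : Matrix ι ι ℂ} (hA : A.PosSemidef) : (psdSqrt hA).PosSemidef := by
  rw [psdSqrt_eq_cfc]; exact Matrix.nonneg_iff_posSemidef.mp (CFC.sqrt_nonneg A)

open scoped MatrixOrder in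
lemma psdSqrt_mul_self {A : Matrix ι ι ℂ} (hA : A.PosSemidef) : psdSqrt hA * psdSqrt hA = A := by
  rw [psdSqrt_eq_cfc]; exact CFC.sqrt_mul_sqrt_self A (Matrix.nonneg_iff_posSemidef.mpr hA)

open scoped MatrixOrder in
lemma eq_psdSqrt_of_sq_eq {A B : Matrix ι ι ℂ} (hB : B.PosSemidef) (hA : A.PosSemidef)
    (h : B ^ 2 = A) : B = psdSqrt hA := by
  rw [psdSqrt_eq_cfc]
  exact (CFC.sqrt_unique (by rw [← pow_two]; exact h) (Matrix.nonneg_iff_posSemidef.mpr hB)).symm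


lemma trace_unitary_conj (U D : Matrix ι ι ℂ) (hU : star U * U = 1) :
    (U * D * star U).trace = D.trace := by
  rw [trace_mul_cycle, hU, one_mul]

lemma re_diag_nonneg {X : Matrix ι ι ℂ} (hX : X.PosSemidef) (i : ι) :
    0 ≤ (X i i).re := by
  exact (Complex.le_def.mp hX.diag_nonneg).1

lemma trace_conjTranspose_mul_self_re_nonneg (A : Matrix ι ι ℂ) :
    0 ≤ ((Aᴴ * A).trace).re := by
  rw [trace, Complex.re_sum]
  refine Finset.sum_nonneg fun k _ => ?_
  rw [diag, mul_apply, Complex.re_sum]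
  refine Finset.sum_nonneg fun m _ => ?_
  simp only [conjTranspose_apply, RCLike.star_def, ← Complex.normSq_eq_conj_mul_self,
    Complex.ofReal_re]
  exact Complex.normSq_nonneg _

lemma unitary_conj_mul (U D₁ D₂ : Matrix ι ι ℂ) (hU : star U * U = 1) :
    (U * D₁ * star U) * (U * D₂ * star U) = U * (D₁ * D₂) * star U := by
  calc (U * D₁ * star U) * (U * D₂ * star U)
      = U * D₁ * ((star U * U) * (D₂ * star U)) := by noncomm_ring
    _ = U * (D₁ * D₂) * star U := by rw [hU, one_mul]; noncomm_ring





lemma frobenius_cs (A B : Matrix ι ι ℂ) :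
    ‖((Aᴴ * B).trace)‖ ≤
      Real.sqrt (((Aᴴ * A).trace).re) * Real.sqrt (((Bᴴ * B).trace).re) := by
  let x : EuclideanSpace ℂ (ι × ι) := WithLp.toLp 2 (fun p : ι × ι => A p.1 p.2)
  let y : EuclideanSpace ℂ (ι × ι) := WithLp.toLp 2 (fun p : ι × ι => B p.1 p.2)
  have hinner : ∀ (C D : Matrix ι ι ℂ),
      ((Cᴴ * D).trace) = ∑ p : ι × ι, (starRingEnd ℂ) (C p.1 p.2) * D p.1 p.2 := by
    intro C D
    rw [trace, Fintype.sum_prod_type]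
    simp only [diag, mul_apply, conjTranspose_apply, RCLike.star_def]
    rw [Finset.sum_comm]
  have h1 : ((Aᴴ * B).trace) = inner ℂ x y := by
    rw [hinner, PiLp.inner_apply]
    refine Finset.sum_congr rfl fun p _ => ?_
    simp [x, y, mul_comm]
  have hnx : ∀ (C : Matrix ι ι ℂ) (z : EuclideanSpace ℂ (ι × ι)),
      (∀ p : ι × ι, z p = C p.1 p.2) → ‖z‖ = Real.sqrt (((Cᴴ * C).trace).re) := by
    intro C z hz
    rw [EuclideanSpace.norm_eq, hinner, Complex.re_sum]
    congr 1
    refine Finset.sum_congr rfl fun p _ => ?_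
    rw [hz p, ← Complex.normSq_eq_conj_mul_self, Complex.ofReal_re, Complex.normSq_eq_norm_sq]
  rw [h1, ← hnx A x (fun p => rfl), ← hnx B y (fun p => rfl)]
  exact norm_inner_le_norm x y

lemma one_sub_mul_conjTranspose_posSemidef {W D : Matrix ι ι ℂ}
    (hD : Wᴴ * W = D) (hD2 : D * D = D) (hDH : Dᴴ = D) :
    (1 - W * Wᴴ).PosSemidef := by
  have h3 : W * Wᴴ * (W * Wᴴ) = W * D * Wᴴ := by
    calc W * Wᴴ * (W * Wᴴ) = W * (Wᴴ * W) * Wᴴ := by noncomm_ring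
      _ = W * D * Wᴴ := by rw [hD]
  have h5 : (1 - D) * (1 - D) = 1 - D := by
    rw [mul_sub, sub_mul, sub_mul, one_mul, mul_one, hD2]; abel_nf; rw [one_mul]
  have h4 : (W * (1 - D)) * (W * (1 - D))ᴴ = W * Wᴴ - W * D * Wᴴ := by
    rw [conjTranspose_mul, conjTranspose_sub, conjTranspose_one, hDH]
    calc W * (1 - D) * ((1 - D) * Wᴴ) = W * ((1 - D) * (1 - D)) * Wᴴ := by noncomm_ring
      _ = W * (1 - D) * Wᴴ := by rw [h5]
      _ = W * Wᴴ - W * D * Wᴴ := by noncomm_ring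
  have key : 1 - W * Wᴴ =
      (1 - W * Wᴴ)ᴴ * (1 - W * Wᴴ) + (W * (1 - D)) * (W * (1 - D))ᴴ := by
    have h1 : (1 - W * Wᴴ)ᴴ = 1 - W * Wᴴ := by
      rw [conjTranspose_sub, conjTranspose_one, conjTranspose_mul,
        conjTranspose_conjTranspose]
    rw [h1, h4, mul_sub, sub_mul, sub_mul, one_mul, mul_one, h3]
    abel_nf
    rw [one_mul]
  rw [key]
  exact (posSemidef_conjTranspose_mul_self _).add (posSemidef_self_mul_conjTranspose _)

lemma trace_pick (Y : Matrix ι ι ℂ) (i : ι) :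
    (diagonal (Pi.single i 1) * Y * diagonal (Pi.single i 1)).trace = Y i i := by
  rw [trace]
  simp [diag, diagonal_mul, mul_diagonal, Pi.single_apply]

lemma min_eq_half (a b : ℝ) : min a b = (a + b - |a - b|) / 2 := by
  rcases le_total a b with h | h
  · rw [min_eq_left h, abs_of_nonpos (by linarith)]; ring
  · rw [min_eq_right h, abs_of_nonneg (by linarith)]; ring


lemma trace_sqrt {A : Matrix ι ι ℂ} (hA : A.PosSemidef) :
    (psdSqrt hA).trace = ∑ i, (Real.sqrt (hA.1.eigenvalues i) : ℂ) := by
  rw [psdSqrt,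
    trace_unitary_conj _ _ (Matrix.UnitaryGroup.star_mul_self hA.1.eigenvectorUnitary),
    trace_diagonal]
  rfl

lemma star_diag_spectral {A : Matrix ι ι ℂ} (hA : A.IsHermitian) :
    star (hA.eigenvectorUnitary : Matrix ι ι ℂ) * A * (hA.eigenvectorUnitary : Matrix ι ι ℂ)
      = diagonal (fun i => (hA.eigenvalues i : ℂ)) := by
  set U : Matrix ι ι ℂ := (hA.eigenvectorUnitary : Matrix ι ι ℂ)
  have hU : star U * U = 1 := Matrix.UnitaryGroup.star_mul_self hA.eigenvectorUnitary
  conv_lhs => rw [hA.spectral_theorem]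
  calc star U * (U * diagonal (RCLike.ofReal ∘ hA.eigenvalues) * star U) * U
      = (star U * U) * diagonal (RCLike.ofReal ∘ hA.eigenvalues) * (star U * U) := by
        noncomm_ring
    _ = diagonal (fun i => (hA.eigenvalues i : ℂ)) := by rw [hU, one_mul, mul_one]; rfl

lemma traceNorm_hermitian {A : Matrix ι ι ℂ} (hA : A.IsHermitian) :
    traceNorm A = ∑ i, |hA.eigenvalues i| := by
  set U : Matrix ι ι ℂ := (hA.eigenvectorUnitary : Matrix ι ι ℂ) with hUdef
  have hU : star U * U = 1 := Matrix.UnitaryGroup.star_mul_self hA.eigenvectorUnitary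
  set B : Matrix ι ι ℂ := U * diagonal (fun i => (Complex.ofReal |hA.eigenvalues i|)) * star U with hB
  have hBpsd : B.PosSemidef := by
    refine Matrix.PosSemidef.mul_mul_conjTranspose_same ?_ U
    refine Matrix.posSemidef_diagonal_iff.mpr fun i => ?_
    exact_mod_cast Complex.zero_le_real.mpr (abs_nonneg _)
  have hsq : B ^ 2 = Aᴴ * A := by
    rw [pow_two, hB, unitary_conj_mul _ _ _ hU, diagonal_mul_diagonal, hA.eq]
    conv_rhs => rw [hA.spectral_theorem, Unitary.conjStarAlgAut_apply]
    rw [unitary_conj_mul _ _ _ hU, diagonal_mul_diagonal]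
    have he : (fun i => (Complex.ofReal |hA.eigenvalues i|) * (Complex.ofReal |hA.eigenvalues i|))
        = fun i => ((RCLike.ofReal ∘ hA.eigenvalues : ι → ℂ) i
            * (RCLike.ofReal ∘ hA.eigenvalues : ι → ℂ) i) := by
      funext i
      simp only [Function.comp_apply]
      rw [show ((RCLike.ofReal (hA.eigenvalues i) : ℂ)) = Complex.ofReal (hA.eigenvalues i) from rfl,
        ← Complex.ofReal_mul, ← Complex.ofReal_mul, ← abs_mul, abs_mul_self]
    rw [he]
  have hBs := eq_psdSqrt_of_sq_eq hBpsd (Matrix.posSemidef_conjTranspose_mul_self A) hsq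
  rw [traceNorm, ← hBs, hB, trace_unitary_conj _ _ hU, trace_diagonal]
  rw [Complex.re_sum]
  simp




lemma classical_bound (p q : ℝ) (hp : 0 < p) (hq : 0 < q)
    (P Q : ι → ℝ) (hP : ∀ i, 0 ≤ P i) (hQ : ∀ i, 0 ≤ Q i)
    (hs : ∑ i, (p * P i + q * Q i) = 1) :
    p * q * (∑ i, Real.sqrt (P i * Q i)) ^ 2 ≤ ∑ i, min (p * P i) (q * Q i) := by
  set s : ι → ℝ := fun i => p * P i + q * Q i with hsdef
  have hs0 : ∀ i, 0 ≤ s i := fun i => add_nonneg (mul_nonneg hp.le (hP i)) (mul_nonneg hq.le (hQ i))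
  set f : ι → ℝ := fun i =>
    if s i = 0 then 0 else Real.sqrt (P i * Q i) / Real.sqrt (s i) with hfdef
  set g : ι → ℝ := fun i => Real.sqrt (s i) with hgdef
  have hfg : ∀ i, f i * g i = Real.sqrt (P i * Q i) := by
    intro i
    by_cases h : s i = 0
    · have hPi : P i = 0 := by
        have := hQ i; have := hP i; simp only [hsdef] at h; nlinarith
      simp [hfdef, hgdef, h, hPi]
    · have hpos : 0 < s i := lt_of_le_of_ne (hs0 i) (Ne.symm h)
      simp only [hfdef, hgdef, if_neg h]
      field_simp
  have hg2 : ∑ i, g i ^ 2 = 1 := by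
    rw [← hs]
    exact Finset.sum_congr rfl fun i _ => Real.sq_sqrt (hs0 i)
  have hcs := Finset.sum_mul_sq_le_sq_mul_sq Finset.univ f g
  rw [hg2, mul_one] at hcs
  have hfg' : (∑ i, Real.sqrt (P i * Q i)) ^ 2 ≤ ∑ i, f i ^ 2 := by
    calc (∑ i, Real.sqrt (P i * Q i)) ^ 2 = (∑ i, f i * g i) ^ 2 := by
          rw [Finset.sum_congr rfl fun i _ => (hfg i).symm]
      _ ≤ ∑ i, f i ^ 2 := hcs
  have hkey : ∀ i, p * q * f i ^ 2 ≤ min (p * P i) (q * Q i) := by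
    intro i
    by_cases h : s i = 0
    · simp only [hfdef, if_pos h]
      have := mul_nonneg (le_of_lt hp) (hP i)
      have := mul_nonneg (le_of_lt hq) (hQ i)
      simp [le_min_iff]; constructor <;> assumption
    · have hpos : 0 < s i := lt_of_le_of_ne (hs0 i) (Ne.symm h)
      have hf2 : f i ^ 2 = P i * Q i / s i := by
        simp only [hfdef, if_neg h, div_pow, Real.sq_sqrt (mul_nonneg (hP i) (hQ i)),
          Real.sq_sqrt (hs0 i)]
      rw [hf2]
      rw [mul_div_assoc', div_le_iff₀ hpos]
      have hsi : s i = p * P i + q * Q i := rfl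
      rcases le_total (p * P i) (q * Q i) with hle | hle
      · rw [min_eq_left hle]
        have h1 : 0 ≤ p * P i := mul_nonneg hp.le (hP i)
        rw [hsi]; nlinarith [sq_nonneg (p * P i)]
      · rw [min_eq_right hle]
        have h1 : 0 ≤ q * Q i := mul_nonneg hq.le (hQ i)
        rw [hsi]; nlinarith [sq_nonneg (q * Q i)]
  calc p * q * (∑ i, Real.sqrt (P i * Q i)) ^ 2 ≤ p * q * ∑ i, f i ^ 2 := by
        exact mul_le_mul_of_nonneg_left hfg' (by positivity)
    _ = ∑ i, p * q * f i ^ 2 := Finset.mul_sum _ _ _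
    _ ≤ ∑ i, min (p * P i) (q * Q i) := Finset.sum_le_sum fun i _ => hkey i


lemma traceNorm_nonneg (A : Matrix ι ι ℂ) : 0 ≤ traceNorm A := by
  rw [traceNorm, trace, Complex.re_sum]
  exact Finset.sum_nonneg fun i _ =>
    re_diag_nonneg (psdSqrt_posSemidef (Matrix.posSemidef_conjTranspose_mul_self A)) i

lemma traceNorm_mul_le (R S U : Matrix ι ι ℂ) (hR : Rᴴ = R) (hS : Sᴴ = S)
    (hU : Uᴴ * U = 1) (hU' : U * Uᴴ = 1) :
    traceNorm (R * S) ≤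
      ∑ i, Real.sqrt (((Uᴴ * (R * R) * U) i i).re * ((Uᴴ * (S * S) * U) i i).re) := by
  set M := R * S with hM
  have hN := Matrix.posSemidef_conjTranspose_mul_self M
  set ν := hN.1.eigenvalues with hν
  set V : Matrix ι ι ℂ := (hN.1.eigenvectorUnitary : Matrix ι ι ℂ) with hV
  have hVV : Vᴴ * V = 1 := by
    rw [← Matrix.star_eq_conjTranspose]
    exact Matrix.UnitaryGroup.star_mul_self hN.1.eigenvectorUnitary
  have hVV' : V * Vᴴ = 1 := by
    rw [← Matrix.star_eq_conjTranspose]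
    exact Matrix.mem_unitaryGroup_iff.mp hN.1.eigenvectorUnitary.2
  have hν0 : ∀ j, 0 ≤ ν j := hN.eigenvalues_nonneg
  have htN : traceNorm M = ∑ j, Real.sqrt (ν j) := by
    rw [traceNorm, trace_sqrt hN, Complex.re_sum]
    simp
    rfl
  have hdiagN : Vᴴ * (Mᴴ * M) * V = diagonal (fun j => ((ν j : ℝ) : ℂ)) := by
    have := star_diag_spectral hN.1
    rwa [Matrix.star_eq_conjTranspose] at this
  set cc : ι → ℂ := fun j => (((if ν j = 0 then 0 else (Real.sqrt (ν j))⁻¹ : ℝ)) : ℂ) with hcc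
  set W := M * V * diagonal cc with hW
  set dd : ι → ℂ := fun j => (((if ν j = 0 then (0:ℝ) else 1 : ℝ)) : ℂ) with hdd
  have hcstar : star cc = cc := by
    funext j; simp [hcc]
  have hddstar : star dd = dd := by
    funext j; simp [hdd]
  have hWH : Wᴴ = diagonal cc * (Vᴴ * Mᴴ) := by
    rw [hW, conjTranspose_mul, conjTranspose_mul, diagonal_conjTranspose, hcstar]
  have hWW : Wᴴ * W = diagonal dd := by
    rw [hWH, hW]
    calc diagonal cc * (Vᴴ * Mᴴ) * (M * V * diagonal cc)
        = diagonal cc * (Vᴴ * (Mᴴ * M) * V) * diagonal cc := by noncomm_ring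
      _ = diagonal cc * diagonal (fun j => ((ν j : ℝ) : ℂ)) * diagonal cc := by rw [hdiagN]
      _ = diagonal dd := by
          rw [diagonal_mul_diagonal, diagonal_mul_diagonal]
          have hfun : (fun j => cc j * ((ν j : ℝ) : ℂ) * cc j) = dd := by
            funext j
            by_cases h : ν j = 0
            · simp [hcc, hdd, h]
            · simp only [hcc, hdd, if_neg h]
              norm_cast
              rw [show (Real.sqrt (ν j))⁻¹ * ν j * (Real.sqrt (ν j))⁻¹
                  = ν j / (Real.sqrt (ν j) * Real.sqrt (ν j)) from by ring,
                Real.mul_self_sqrt (hν0 j), div_self h]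
          rw [hfun]
  have hD2 : diagonal dd * diagonal dd = diagonal dd := by
    rw [diagonal_mul_diagonal]
    have hfun : (fun j => dd j * dd j) = dd := by
      funext j
      by_cases h : ν j = 0 <;> simp [hdd, h]
    rw [hfun]
  have hDH : (diagonal dd)ᴴ = diagonal dd := by
    rw [diagonal_conjTranspose, hddstar]
  have hWMV : Wᴴ * (M * V) = diagonal (fun j => ((Real.sqrt (ν j) : ℝ) : ℂ)) := by
    rw [hWH]
    calc diagonal cc * (Vᴴ * Mᴴ) * (M * V)
        = diagonal cc * (Vᴴ * (Mᴴ * M) * V) := by noncomm_ring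
      _ = diagonal cc * diagonal (fun j => ((ν j : ℝ) : ℂ)) := by rw [hdiagN]
      _ = diagonal (fun j => ((Real.sqrt (ν j) : ℝ) : ℂ)) := by
          rw [diagonal_mul_diagonal]
          have hfun : (fun j => cc j * ((ν j : ℝ) : ℂ)) = fun j => ((Real.sqrt (ν j) : ℝ) : ℂ) := by
            funext j
            by_cases h : ν j = 0
            · simp [hcc, h]
            · simp only [hcc, if_neg h]
              norm_cast
              rw [inv_mul_eq_div, Real.div_sqrt]
          rw [hfun]
  set Pm : ι → Matrix ι ι ℂ := fun i => diagonal (Pi.single i 1) with hPm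
  have hPmH : ∀ i, (Pm i)ᴴ = Pm i := by
    intro i
    rw [hPm, diagonal_conjTranspose]
    have hfun : star (Pi.single i (1:ℂ) : ι → ℂ) = (Pi.single i 1 : ι → ℂ) := by
      funext k; simp [Pi.single_apply, apply_ite]
    rw [hfun]
  have hPm2 : ∀ i, Pm i * Pm i = Pm i := by
    intro i
    rw [hPm, diagonal_mul_diagonal]
    have hfun : (fun k => (Pi.single i (1:ℂ) : ι → ℂ) k * (Pi.single i 1 : ι → ℂ) k) = (Pi.single i 1 : ι → ℂ) := by
      funext k; by_cases hk : k = i <;> simp [Pi.single_apply, hk]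
    rw [hfun]
  have hPmsum : ∑ i, Pm i = 1 := by
    have h1 : ∑ i, Pm i = diagonal (∑ i, Pi.single i (1:ℂ)) :=
      (map_sum (Matrix.diagonalAddMonoidHom ι ℂ) _ _).symm
    rw [h1, Finset.univ_sum_single]
    rfl
  set Am : ι → Matrix ι ι ℂ := fun i => Pm i * (Uᴴ * R * W) with hAm
  set Bm : ι → Matrix ι ι ℂ := fun i => Pm i * (Uᴴ * S * V) with hBm
  have hAmH : ∀ i, (Am i)ᴴ = Wᴴ * R * U * Pm i := by
    intro i
    simp only [hAm, conjTranspose_mul, conjTranspose_conjTranspose, hPmH, hR]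
    noncomm_ring
  have hBmH : ∀ i, (Bm i)ᴴ = Vᴴ * S * U * Pm i := by
    intro i
    simp only [hBm, conjTranspose_mul, conjTranspose_conjTranspose, hPmH, hS]
    noncomm_ring
  have hsplit : Wᴴ * (M * V) = ∑ i, (Am i)ᴴ * Bm i := by
    have hterm : ∀ i, (Am i)ᴴ * Bm i = Wᴴ * R * U * Pm i * (Uᴴ * S * V) := by
      intro i
      simp only [hAmH, hBm]
      calc Wᴴ * R * U * Pm i * (Pm i * (Uᴴ * S * V))
          = Wᴴ * R * U * (Pm i * Pm i) * (Uᴴ * S * V) := by noncomm_ring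
        _ = Wᴴ * R * U * Pm i * (Uᴴ * S * V) := by rw [hPm2]
    rw [Finset.sum_congr rfl fun i _ => hterm i]
    rw [← Finset.sum_mul]
    have : ∑ i, Wᴴ * R * U * Pm i = Wᴴ * R * U * ∑ i, Pm i := by
      rw [Finset.mul_sum]
    rw [this, hPmsum, mul_one]
    calc Wᴴ * (M * V) = Wᴴ * (R * S * V) := by rw [hM]
      _ = Wᴴ * R * (U * Uᴴ) * S * V := by rw [hU']; noncomm_ring
      _ = Wᴴ * R * U * (Uᴴ * S * V) := by noncomm_ring
  -- diagonal entries of conjugated states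
  have hRRpsd : (Uᴴ * (R * R) * U).PosSemidef := by
    have : (R * R).PosSemidef := by
      have := Matrix.posSemidef_conjTranspose_mul_self R
      rwa [hR] at this
    exact this.conjTranspose_mul_mul_same U
  have hSSpsd : (Uᴴ * (S * S) * U).PosSemidef := by
    have : (S * S).PosSemidef := by
      have := Matrix.posSemidef_conjTranspose_mul_self S
      rwa [hS] at this
    exact this.conjTranspose_mul_mul_same U
  -- trace of Amᴴ * Am
  have hAA : ∀ i, (((Am i)ᴴ * Am i).trace).re ≤ ((Uᴴ * (R * R) * U) i i).re := by
    intro i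
    set C : Matrix ι ι ℂ := Uᴴ * R * W with hC
    have hCH : Cᴴ = Wᴴ * R * U := by
      simp only [hC, conjTranspose_mul, conjTranspose_conjTranspose, hR]
      noncomm_ring
    have h1 : ((Am i)ᴴ * Am i).trace = ((C * Cᴴ)) i i := by
      have e1 : (Am i)ᴴ * Am i = (Pm i * C)ᴴ * (Pm i * C) := by
        simp only [hAm, hC]
      rw [e1, Matrix.trace_mul_comm]
      have e2 : Pm i * C * (Pm i * C)ᴴ = Pm i * (C * Cᴴ) * Pm i := by
        rw [conjTranspose_mul, hPmH]
        noncomm_ring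
      rw [e2, hPm, trace_pick]
    have hXeq : (R * U)ᴴ * (1 - W * Wᴴ) * (R * U) = Uᴴ * (R * R) * U - C * Cᴴ := by
      rw [conjTranspose_mul, hR, hC, hCH]
      noncomm_ring
    have hXpsd : (Uᴴ * (R * R) * U - C * Cᴴ).PosSemidef := by
      rw [← hXeq]
      exact (one_sub_mul_conjTranspose_posSemidef hWW hD2 hDH).conjTranspose_mul_mul_same (R * U)
    have h2 := re_diag_nonneg hXpsd i
    rw [Matrix.sub_apply, Complex.sub_re] at h2
    rw [h1]
    linarith
  have hBB : ∀ i, (((Bm i)ᴴ * Bm i).trace).re = ((Uᴴ * (S * S) * U) i i).re := by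
    intro i
    set C : Matrix ι ι ℂ := Uᴴ * S * V with hC
    have hCH : Cᴴ = Vᴴ * S * U := by
      simp only [hC, conjTranspose_mul, conjTranspose_conjTranspose, hS]
      noncomm_ring
    have h1 : ((Bm i)ᴴ * Bm i).trace = ((C * Cᴴ)) i i := by
      have e1 : (Bm i)ᴴ * Bm i = (Pm i * C)ᴴ * (Pm i * C) := by
        simp only [hBm, hC]
      rw [e1, Matrix.trace_mul_comm]
      have e2 : Pm i * C * (Pm i * C)ᴴ = Pm i * (C * Cᴴ) * Pm i := by
        rw [conjTranspose_mul, hPmH]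
        noncomm_ring
      rw [e2, hPm, trace_pick]
    have hCC : C * Cᴴ = Uᴴ * (S * S) * U := by
      rw [hC, hCH]
      calc Uᴴ * S * V * (Vᴴ * S * U) = Uᴴ * S * (V * Vᴴ) * S * U := by noncomm_ring
        _ = Uᴴ * S * S * U := by rw [hVV']; noncomm_ring
        _ = Uᴴ * (S * S) * U := by noncomm_ring
    rw [h1, hCC]
  -- final chain
  have hfinal : ∑ j, Real.sqrt (ν j) ≤
      ∑ i, Real.sqrt (((Uᴴ * (R * R) * U) i i).re * ((Uᴴ * (S * S) * U) i i).re) := by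
    have e1 : (∑ j, Real.sqrt (ν j) : ℝ) = ((Wᴴ * (M * V)).trace).re := by
      rw [hWMV, trace_diagonal, Complex.re_sum]
      simp
    rw [e1, hsplit, Matrix.trace_sum, Complex.re_sum]
    refine Finset.sum_le_sum fun i _ => ?_
    have h1 : (((Am i)ᴴ * Bm i).trace).re ≤ ‖(((Am i)ᴴ * Bm i).trace)‖ :=
      Complex.re_le_norm _
    refine le_trans h1 (le_trans (frobenius_cs (Am i) (Bm i)) ?_)
    rw [Real.sqrt_mul (re_diag_nonneg hRRpsd i)]
    refine mul_le_mul (Real.sqrt_le_sqrt (hAA i)) (le_of_eq ?_) (Real.sqrt_nonneg _)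
      (Real.sqrt_nonneg _)
    rw [hBB i]
  calc traceNorm M = ∑ j, Real.sqrt (ν j) := htN
    _ ≤ _ := hfinal

end Helpers

/-- **Single-copy lower bound on the optimal error probability**:
`(1/2)(1 − ‖pρ − qσ‖₁) ≥ pq·F(ρ,σ)`. -/
theorem err_prob_ge_fidelity {d : ℕ} (ρ σ : Matrix (Fin d) (Fin d) ℂ)
    (hρ : IsState ρ) (hσ : IsState σ)
    (p q : ℝ) (hp : p ∈ Set.Ioo (0 : ℝ) 1) (hq : q = 1 - p) :
    p * q * Fid ρ σ ≤ (1 / 2) * (1 - traceNorm (p • ρ - q • σ)) := by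
  classical
  obtain ⟨hρpsd, hρtr⟩ := hρ
  obtain ⟨hσpsd, hσtr⟩ := hσ
  obtain ⟨hp0, hp1⟩ := hp
  have hq0 : 0 < q := by rw [hq]; linarith
  simp only [Fid]
  have hRe : matSqrt ρ = psdSqrt hρpsd := by rw [matSqrt, dif_pos hρpsd]
  have hSe : matSqrt σ = psdSqrt hσpsd := by rw [matSqrt, dif_pos hσpsd]
  set R := matSqrt ρ with hRdef
  set S := matSqrt σ with hSdef
  have hRH : R.conjTranspose = R := by rw [hRe]; exact (psdSqrt_posSemidef hρpsd).1
  have hSH : S.conjTranspose = S := by rw [hSe]; exact (psdSqrt_posSemidef hσpsd).1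
  have hRR : R * R = ρ := by rw [hRe]; exact psdSqrt_mul_self hρpsd
  have hSS : S * S = σ := by rw [hSe]; exact psdSqrt_mul_self hσpsd
  have hH : (p • ρ - q • σ).IsHermitian := by
    show (p • ρ - q • σ).conjTranspose = p • ρ - q • σ
    rw [Matrix.conjTranspose_sub, Matrix.conjTranspose_smul, Matrix.conjTranspose_smul,
      star_trivial, star_trivial, hρpsd.1.eq, hσpsd.1.eq]
  set U : Matrix (Fin d) (Fin d) ℂ := (hH.eigenvectorUnitary : Matrix (Fin d) (Fin d) ℂ)
    with hUdef
  have hU : U.conjTranspose * U = 1 := by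
    rw [hUdef, ← Matrix.star_eq_conjTranspose]
    exact Matrix.UnitaryGroup.star_mul_self hH.eigenvectorUnitary
  have hU' : U * U.conjTranspose = 1 := by
    rw [hUdef, ← Matrix.star_eq_conjTranspose]
    exact Matrix.mem_unitaryGroup_iff.mp hH.eigenvectorUnitary.2
  set P : Fin d → ℝ := fun i => ((U.conjTranspose * ρ * U) i i).re with hPdef
  set Q : Fin d → ℝ := fun i => ((U.conjTranspose * σ * U) i i).re with hQdef
  have hPnn : ∀ i, 0 ≤ P i := fun i =>
    re_diag_nonneg (hρpsd.conjTranspose_mul_mul_same U) i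
  have hQnn : ∀ i, 0 ≤ Q i := fun i =>
    re_diag_nonneg (hσpsd.conjTranspose_mul_mul_same U) i
  have htrP : ∀ (X : Matrix (Fin d) (Fin d) ℂ), ∑ i, ((U.conjTranspose * X * U) i i).re = (X.trace).re := by
    intro X
    have h1 : (U.conjTranspose * X * U).trace = X.trace := by
      rw [Matrix.trace_mul_cycle, hU', Matrix.one_mul]
    rw [← h1, Matrix.trace, Complex.re_sum]
    rfl
  have hPsum : ∑ i, P i = 1 := by
    rw [hPdef]
    rw [htrP ρ, hρtr]
    rfl
  have hQsum : ∑ i, Q i = 1 := by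
    rw [hQdef]
    rw [htrP σ, hσtr]
    rfl
  have hsum1 : ∑ i, (p * P i + q * Q i) = 1 := by
    rw [Finset.sum_add_distrib, ← Finset.mul_sum, ← Finset.mul_sum, hPsum, hQsum, hq]
    ring
  have hdiag : U.conjTranspose * (p • ρ - q • σ) * U
      = Matrix.diagonal (fun i => ((hH.eigenvalues i : ℝ) : ℂ)) := by
    have h0 := star_diag_spectral hH
    rw [Matrix.star_eq_conjTranspose] at h0
    exact h0
  have heig : ∀ i, p * P i - q * Q i = hH.eigenvalues i := by
    intro i
    have h2 : U.conjTranspose * (p • ρ - q • σ) * U = p • (U.conjTranspose * ρ * U) - q • (U.conjTranspose * σ * U) := by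
      rw [Matrix.mul_sub, Matrix.sub_mul, Matrix.mul_smul, Matrix.mul_smul,
        Matrix.smul_mul, Matrix.smul_mul]
    have h3 := congrArg (fun X : Matrix (Fin d) (Fin d) ℂ => (X i i).re) (h2.symm.trans hdiag)
    simp only [Matrix.sub_apply, Matrix.smul_apply, Matrix.diagonal_apply_eq,
      Complex.sub_re, Complex.smul_re, Complex.ofReal_re] at h3
    exact h3
  have hTN : traceNorm (p • ρ - q • σ) = ∑ i, |p * P i - q * Q i| := by
    rw [traceNorm_hermitian hH]
    exact (Finset.sum_congr rfl fun i _ => by rw [heig i]).symm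
  have hFid : traceNorm (R * S) ^ 2 ≤ (∑ i, Real.sqrt (P i * Q i)) ^ 2 := by
    have hkey := traceNorm_mul_le R S U hRH hSH hU hU'
    rw [hRR, hSS] at hkey
    exact pow_le_pow_left₀ (traceNorm_nonneg _) hkey 2
  have hclassical := classical_bound p q hp0 hq0 P Q hPnn hQnn hsum1
  have hRHS : (1 / 2 : ℝ) * (1 - traceNorm (p • ρ - q • σ)) = ∑ i, min (p * P i) (q * Q i) := by
    rw [hTN]
    rw [show (1:ℝ) - ∑ i, |p * P i - q * Q i|
        = ∑ i, (p * P i + q * Q i) - ∑ i, |p * P i - q * Q i| from by rw [hsum1],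
      ← Finset.sum_sub_distrib, Finset.mul_sum]
    exact Finset.sum_congr rfl fun i _ => by rw [min_eq_half]; ring
  calc p * q * traceNorm (R * S) ^ 2
      ≤ p * q * (∑ i, Real.sqrt (P i * Q i)) ^ 2 :=
        mul_le_mul_of_nonneg_left hFid (by positivity)
    _ ≤ ∑ i, min (p * P i) (q * Q i) := hclassical
    _ = (1 / 2 : ℝ) * (1 - traceNorm (p • ρ - q • σ)) := hRHS.symm


end QHT

end
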